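/- Let f : (0,∞) → [0,∞) be measurable with ∫_0^∞ √π · f(s²) ds = 1, and let φ : [0,∞) → [0,1] be continuous with φ(0) = 1, differentiable on (0,∞), and satisfying −φ'(u) = ∫_0^∞ e^{−r u²} f(r) dr for all u > 0. Then φ(t) = ∫_0^∞ erfc(s·t) · √π · f(s²) ds for all t ≥ 0. -/

import Mathlib

open Real Set MeasureTheory

/-- The complementary error function `erfc x = (2/√π) ∫_x^∞ e^{-y²} dy`. -/
noncomputable def erfc (x : ℝ) : ℝ :=
  (2 / Real.sqrt Real.pi) * ∫ y in Set.Ioi x, Real.exp (-y ^ 2)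

lemma exp_neg_sq_integrable : MeasureTheory.Integrable (fun y : ℝ => Real.exp (-y ^ 2)) := by
  simpa using integrable_exp_neg_mul_sq one_pos

lemma gauss_Ioi : ∫ y in Set.Ioi (0:ℝ), Real.exp (-y ^ 2) = Real.sqrt Real.pi / 2 := by
  simpa using integral_gaussian_Ioi 1

lemma erfc_eq {x : ℝ} (hx : 0 ≤ x) :
    erfc x = 1 - (2 / Real.sqrt Real.pi) * ∫ y in (0:ℝ)..x, Real.exp (-y ^ 2) := by
  have hsplit : (∫ y in Set.Ioc 0 x, Real.exp (-y ^ 2)) + ∫ y in Set.Ioi x, Real.exp (-y ^ 2)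
      = ∫ y in Set.Ioi (0:ℝ), Real.exp (-y ^ 2) := by
    rw [← setIntegral_union (Set.Ioc_disjoint_Ioi le_rfl) measurableSet_Ioi
      exp_neg_sq_integrable.integrableOn exp_neg_sq_integrable.integrableOn,
      Set.Ioc_union_Ioi_eq_Ioi hx]
  have hπ : Real.sqrt Real.pi ≠ 0 := by positivity
  rw [intervalIntegral.integral_of_le hx]
  unfold erfc
  rw [gauss_Ioi] at hsplit
  have : (∫ y in Set.Ioi x, Real.exp (-y ^ 2))
      = Real.sqrt Real.pi / 2 - ∫ y in Set.Ioc 0 x, Real.exp (-y ^ 2) := by linarith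
  rw [this]
  field_simp

/-- If `g(s) = √π f(s²)` is a probability density on `(0,∞)` and
`-φ'(u) = ∫₀^∞ e^{-r u²} f(r) dr` for `u > 0`, with `φ` continuous on `[0,∞)`,
`φ(0) = 1` and `φ` taking values in `[0,1]`, then `φ` is the scale mixture of `erfc`
with mixing density `g`:  `φ(t) = ∫₀^∞ erfc(s t) √π f(s²) ds` for `t ≥ 0`. -/
theorem erfc_mixture_from_laplace (f : ℝ → ℝ) (hf_meas : Measurable f)
    (hf_nonneg : ∀ s, 0 < s → 0 ≤ f s)
    (hf_density : ∫ s in Set.Ioi (0:ℝ), Real.sqrt Real.pi * f (s ^ 2) = 1)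
    (φ : ℝ → ℝ)
    (hφ_cont : ContinuousOn φ (Set.Ici 0))
    (hφ0 : φ 0 = 1)
    (hφ_mem : ∀ t, 0 ≤ t → φ t ∈ Set.Icc (0:ℝ) 1)
    (hφ_diff : DifferentiableOn ℝ φ (Set.Ioi 0))
    (hφ_deriv : ∀ u : ℝ, 0 < u →
      -deriv φ u = ∫ r in Set.Ioi (0:ℝ), Real.exp (-r * u ^ 2) * f r) :
    ∀ t : ℝ, 0 ≤ t →
      φ t = ∫ s in Set.Ioi (0:ℝ), erfc (s * t) * (Real.sqrt Real.pi * f (s ^ 2)) := by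
  intro t ht
  have hπ0 : (0:ℝ) < Real.sqrt Real.pi := Real.sqrt_pos.mpr Real.pi_pos
  set g : ℝ → ℝ := fun s => Real.sqrt Real.pi * f (s ^ 2) with hg_def
  have hg_meas : Measurable g := (hf_meas.comp (measurable_id.pow_const 2)).const_mul _
  have hg_nonneg : ∀ s : ℝ, 0 < s → 0 ≤ g s := fun s hs =>
    mul_nonneg hπ0.le (hf_nonneg _ (by positivity))
  have hg_int : IntegrableOn g (Set.Ioi 0) := by
    by_contra h
    rw [MeasureTheory.integral_undef h] at hf_density
    norm_num at hf_density
  set c : ℝ → ℝ := fun s => (2 / Real.sqrt Real.pi) * ∫ y in (0:ℝ)..(s*t), Real.exp (-y ^ 2)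
    with hc_def
  have hc_cont : Continuous c := by
    have h1 : Continuous fun x : ℝ => ∫ y in (0:ℝ)..x, Real.exp (-y ^ 2) :=
      intervalIntegral.continuous_primitive
        (fun a b => exp_neg_sq_integrable.intervalIntegrable) 0
    exact continuous_const.mul (h1.comp (continuous_id.mul continuous_const))
  have hc_mem : ∀ s : ℝ, 0 ≤ s → c s ∈ Set.Icc (0:ℝ) 1 := by
    intro s hs
    have hst : 0 ≤ s * t := mul_nonneg hs ht
    constructor
    · exact mul_nonneg (by positivity)
        (intervalIntegral.integral_nonneg hst fun y _ => (Real.exp_pos _).le)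
    · have hle : (∫ y in (0:ℝ)..(s*t), Real.exp (-y ^ 2)) ≤ Real.sqrt Real.pi / 2 := by
        rw [intervalIntegral.integral_of_le hst, ← gauss_Ioi]
        exact setIntegral_mono_set exp_neg_sq_integrable.integrableOn
          (Filter.Eventually.of_forall fun y => (Real.exp_pos _).le)
          (HasSubset.Subset.eventuallyLE Set.Ioc_subset_Ioi_self)
      calc c s ≤ (2 / Real.sqrt Real.pi) * (Real.sqrt Real.pi / 2) :=
            mul_le_mul_of_nonneg_left hle (by positivity)
        _ = 1 := by field_simp
  have herfc : ∀ s : ℝ, 0 < s → erfc (s * t) = 1 - c s := fun s hs =>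
    erfc_eq (mul_nonneg hs.le ht)
  -- the kernel
  set K : ℝ → ℝ → ℝ := fun s u => 2 * s * Real.exp (-(s*u) ^ 2) * f (s ^ 2) with hK_def
  have hK_nonneg : ∀ s u : ℝ, 0 < s → 0 ≤ K s u := fun s u hs =>
    mul_nonneg (mul_nonneg (by positivity) (Real.exp_pos _).le) (hf_nonneg _ (by positivity))
  have hcg : ∀ s : ℝ, 0 < s → c s * g s = ∫ u in Set.Ioc 0 t, K s u := by
    intro s hs
    have h1 : ∀ u : ℝ, K s u = (2 * s * f (s ^ 2)) * Real.exp (-(s*u) ^ 2) := fun u => by ring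
    have h2 : (∫ u in (0:ℝ)..t, Real.exp (-(s*u) ^ 2))
        = s⁻¹ * ∫ y in (0:ℝ)..(s*t), Real.exp (-y ^ 2) := by
      have := intervalIntegral.integral_comp_mul_left (a := (0:ℝ)) (b := t)
        (fun y => Real.exp (-y ^ 2)) hs.ne'
      simpa [mul_zero, smul_eq_mul] using this
    rw [← intervalIntegral.integral_of_le ht]
    simp only [h1]
    rw [intervalIntegral.integral_const_mul, h2, hc_def, hg_def]
    field_simp
  -- integrability of c * g
  have hcg_int : IntegrableOn (fun s => c s * g s) (Set.Ioi 0) := by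
    apply Integrable.mono hg_int ((hc_cont.measurable.mul hg_meas).aestronglyMeasurable)
    filter_upwards [ae_restrict_mem measurableSet_Ioi] with s hs
    have h1 := hc_mem s (le_of_lt hs)
    have h2 := hg_nonneg s hs
    rw [Real.norm_eq_abs, Real.norm_eq_abs, Pi.mul_apply, abs_of_nonneg (mul_nonneg h1.1 h2),
      abs_of_nonneg h2]
    nlinarith [h1.1, h1.2]
  -- Fubini
  have hK_prod_meas : AEStronglyMeasurable (fun p : ℝ × ℝ => K p.1 p.2)
      (((volume : Measure ℝ).restrict (Set.Ioi 0)).prod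
        ((volume : Measure ℝ).restrict (Set.Ioc 0 t))) := by
    apply Measurable.aestronglyMeasurable
    have hcont : Continuous fun p : ℝ × ℝ => 2 * p.1 * Real.exp (-(p.1 * p.2) ^ 2) := by
      fun_prop
    exact hcont.measurable.mul (hf_meas.comp (measurable_fst.pow_const 2))
  have hK_slice : ∀ s : ℝ, Integrable (fun u => K s u)
      ((volume : Measure ℝ).restrict (Set.Ioc 0 t)) := by
    intro s
    have : Continuous fun u => K s u := by fun_prop
    exact this.integrableOn_Ioc
  have hK_int : Integrable (fun p : ℝ × ℝ => K p.1 p.2)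
      (((volume : Measure ℝ).restrict (Set.Ioi 0)).prod
        ((volume : Measure ℝ).restrict (Set.Ioc 0 t))) := by
    rw [MeasureTheory.integrable_prod_iff hK_prod_meas]
    refine ⟨Filter.Eventually.of_forall fun s => hK_slice s, ?_⟩
    apply hcg_int.congr
    filter_upwards [ae_restrict_mem measurableSet_Ioi] with s hs
    rw [hcg s hs]
    refine setIntegral_congr_fun measurableSet_Ioc fun u _ => ?_
    rw [Real.norm_eq_abs, abs_of_nonneg (hK_nonneg s u hs)]
  have hswap : (∫ s in Set.Ioi (0:ℝ), ∫ u in Set.Ioc 0 t, K s u)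
      = ∫ u in Set.Ioc 0 t, ∫ s in Set.Ioi (0:ℝ), K s u := by
    exact MeasureTheory.integral_integral_swap hK_int
  -- substitution r = s² in the inner integral
  have hsub : ∀ u : ℝ, 0 < u → (∫ s in Set.Ioi (0:ℝ), K s u) = -deriv φ u := by
    intro u hu
    rw [hφ_deriv u hu]
    rw [← integral_comp_rpow_Ioi_of_pos (g := fun r => Real.exp (-r * u ^ 2) * f r) two_pos]
    refine setIntegral_congr_fun measurableSet_Ioi fun x hx => ?_
    have hx0 : (0:ℝ) < x := hx
    have hx2 : x ^ (2:ℝ) = x ^ 2 := by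
      rw [show (2:ℝ) = ((2:ℕ):ℝ) by norm_num, Real.rpow_natCast]
    rw [hK_def]
    simp only [show ((2:ℝ) - 1) = 1 by norm_num, Real.rpow_one, hx2, smul_eq_mul]
    rw [show -(x^2) * u^2 = -(x*u)^2 by ring]
    ring
  -- FTC
  have hderivAt : ∀ x ∈ Set.Ioo (0:ℝ) t, HasDerivAt φ (deriv φ x) x := fun x hx =>
    ((hφ_diff x hx.1).differentiableAt (isOpen_Ioi.mem_nhds hx.1)).hasDerivAt
  have hderiv_nonneg : ∀ x : ℝ, 0 < x → 0 ≤ -deriv φ x := by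
    intro x hx
    rw [hφ_deriv x hx]
    exact setIntegral_nonneg measurableSet_Ioi fun r hr =>
      mul_nonneg (Real.exp_pos _).le (hf_nonneg r hr)
  have hII : IntervalIntegrable (fun u => -deriv φ u) volume 0 t := by
    apply intervalIntegral.intervalIntegrable_deriv_of_nonneg (g := fun u => -φ u)
    · rw [Set.uIcc_of_le ht]
      exact (hφ_cont.mono Set.Icc_subset_Ici_self).neg
    · intro x hx
      rw [min_eq_left ht, max_eq_right ht] at hx
      exact (hderivAt x hx).neg
    · intro x hx
      rw [min_eq_left ht, max_eq_right ht] at hx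
      exact hderiv_nonneg x hx.1
  have hFTC : ∫ u in (0:ℝ)..t, deriv φ u = φ t - 1 := by
    rw [← hφ0]
    exact intervalIntegral.integral_eq_sub_of_hasDeriv_right_of_le ht
      (hφ_cont.mono Set.Icc_subset_Ici_self)
      (fun x hx => (hderivAt x hx).hasDerivWithinAt)
      (by
        have h := hII.neg
        have he : (-fun u => -deriv φ u) = deriv φ := by funext u; simp
        rwa [he] at h)
  have hkey : (∫ u in Set.Ioc 0 t, -deriv φ u) = 1 - φ t := by
    rw [← intervalIntegral.integral_of_le ht, intervalIntegral.integral_neg, hFTC]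
    ring
  -- assemble
  symm
  calc (∫ s in Set.Ioi (0:ℝ), erfc (s * t) * g s)
      = ∫ s in Set.Ioi (0:ℝ), (g s - c s * g s) := by
        refine setIntegral_congr_fun measurableSet_Ioi fun s hs => ?_
        rw [herfc s hs]; ring
    _ = (∫ s in Set.Ioi (0:ℝ), g s) - ∫ s in Set.Ioi (0:ℝ), c s * g s :=
        integral_sub hg_int hcg_int
    _ = 1 - ∫ s in Set.Ioi (0:ℝ), ∫ u in Set.Ioc 0 t, K s u := by
        rw [hf_density]
        congr 1
        exact setIntegral_congr_fun measurableSet_Ioi fun s hs => hcg s hs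
    _ = 1 - ∫ u in Set.Ioc 0 t, ∫ s in Set.Ioi (0:ℝ), K s u := by rw [hswap]
    _ = 1 - ∫ u in Set.Ioc 0 t, -deriv φ u := by
        congr 1
        exact setIntegral_congr_fun measurableSet_Ioc fun u hu => hsub u hu.1
    _ = φ t := by rw [hkey]; ring
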